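/- Let n, t ∈ ℕ with n > t, and let s be an integer with 1 ≤ s ≤ m_n − 1. Suppose x ∈ G_m satisfies x ∈ I_t \ I_{t+1} (that is, x_0 = … = x_{t−1} = 0 and x_t ≠ 0) and the element x − x_t·e_t (obtained from x by replacing its t-th coordinate with 0) does not belong to I_n (that is, x_j ≠ 0 for some j with t < j < n). Then K_{s·M_n}(x) = 0. -/

import Mathlib

open Finset
open scoped ENNReal NNReal

noncomputable section

namespace Vilenkin

/-- The generalized powers `M_0 = 1`, `M_{k+1} = m_k M_k`. -/
def M (m : ℕ → ℕ) : ℕ → ℕ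
  | 0 => 1
  | k + 1 => m k * M m k

/-- The `j`-th digit of `n` in the mixed-radix system determined by `m`. -/
def digit (m : ℕ → ℕ) (n j : ℕ) : ℕ := (n / M m j) % m j

/-- The Vilenkin group `G_m`, the complete direct product of the cyclic groups `Z_{m_k}`. -/
abbrev G (m : ℕ → ℕ) : Type := ∀ k : ℕ, ZMod (m k)

instance (n : ℕ) : MeasurableSpace (ZMod n) := ⊤

/-- The generalized Rademacher functions `r_k(x) = exp(2 π i x_k / m_k)`. -/
def rad (m : ℕ → ℕ) (k : ℕ) (x : G m) : ℂ :=
  Complex.exp (2 * Real.pi * Complex.I * ((x k).val : ℂ) / (m k : ℂ))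

/-- The Vilenkin system `ψ_n = ∏_k r_k^{n_k}` (the product is finite). -/
def psi (m : ℕ → ℕ) (n : ℕ) (x : G m) : ℂ :=
  ∏ j ∈ Finset.range (n + 1), rad m j x ^ digit m n j

/-- The Dirichlet kernels `D_n = ∑_{k=0}^{n-1} ψ_k`. -/
def D (m : ℕ → ℕ) (n : ℕ) (x : G m) : ℂ :=
  ∑ k ∈ Finset.range n, psi m k x

/-- The Fejér kernels `K_n = (1/n) ∑_{k=0}^{n-1} D_k`. -/
def K (m : ℕ → ℕ) (n : ℕ) (x : G m) : ℂ :=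
  (n : ℂ)⁻¹ * ∑ k ∈ Finset.range n, D m k x

/-- The cylinder `I_n(x) = {y : y_j = x_j for j < n}`. -/
def cyl (m : ℕ → ℕ) (n : ℕ) (x : G m) : Set (G m) := {y | ∀ j < n, y j = x j}

/-- The element `e_n` with `n`-th coordinate `1` and all other coordinates `0`. -/
def e (m : ℕ → ℕ) (n : ℕ) : G m := fun k => if k = n then 1 else 0


-- Auxiliary lemmas

lemma M_pos (m : ℕ → ℕ) (hm : ∀ k, 2 ≤ m k) (n : ℕ) : 0 < M m n := by
  induction n with
  | zero => simp [M]
  | succ k ih => exact Nat.mul_pos (by have := hm k; omega) ih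

lemma two_pow_le_M (m : ℕ → ℕ) (hm : ∀ k, 2 ≤ m k) (n : ℕ) : 2 ^ n ≤ M m n := by
  induction n with
  | zero => simp [M]
  | succ k ih =>
    have := hm k
    calc 2 ^ (k+1) = 2 * 2 ^ k := by ring
    _ ≤ m k * M m k := Nat.mul_le_mul this ih
    _ = M m (k+1) := rfl

lemma M_dvd (m : ℕ → ℕ) {i n : ℕ} (h : i ≤ n) : M m i ∣ M m n := by
  induction n with
  | zero => simpa [Nat.le_zero.mp h] using dvd_refl _
  | succ k ih =>
    rcases Nat.lt_or_ge i (k+1) with h' | h'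
    · exact dvd_mul_of_dvd_right (ih (by omega)) _
    · have : i = k + 1 := by omega
      subst this; exact dvd_refl _

lemma M_le (m : ℕ → ℕ) (hm : ∀ k, 2 ≤ m k) {i n : ℕ} (h : i ≤ n) : M m i ≤ M m n :=
  Nat.le_of_dvd (M_pos m hm n) (M_dvd m h)

lemma digit_eq_zero (m : ℕ → ℕ) {k j : ℕ} (h : k < M m j) : digit m k j = 0 := by
  simp [digit, Nat.div_eq_of_lt h]

lemma digit_eq_zero_of_lt (m : ℕ → ℕ) (hm : ∀ k, 2 ≤ m k) {n j : ℕ} (h : n < j) :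
    digit m n j = 0 := by
  apply digit_eq_zero
  have h1 : n < 2 ^ j := lt_of_lt_of_le (Nat.lt_two_pow_self (n := n)) (Nat.pow_le_pow_right (by norm_num) h.le)
  exact lt_of_lt_of_le h1 (two_pow_le_M m hm j)

lemma psi_eq_prod (m : ℕ → ℕ) (hm : ∀ k, 2 ≤ m k) {n N : ℕ} (hN : n < M m N) (x : G m) :
    psi m n x = ∏ j ∈ Finset.range N, rad m j x ^ digit m n j := by
  unfold psi
  rcases le_total (n + 1) N with h | h
  · apply Finset.prod_subset (Finset.range_subset_range.2 h)
    intro j hj hj'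
    rw [digit_eq_zero_of_lt m hm (by simp at hj'; omega), pow_zero]
  · symm
    apply Finset.prod_subset (Finset.range_subset_range.2 h)
    intro j hj hj'
    have hjN : N ≤ j := by simpa using hj'
    rw [digit_eq_zero m (lt_of_lt_of_le hN (M_le m hm hjN)), pow_zero]

lemma digit_add_mul_of_lt (m : ℕ → ℕ) (hm : ∀ k, 2 ≤ m k) {N a k j : ℕ} (hj : j < N) :
    digit m (a * M m N + k) j = digit m k j := by
  obtain ⟨c, hc⟩ := M_dvd m (show j + 1 ≤ N from hj)
  have hMpos : 0 < M m j := M_pos m hm j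
  have key : a * M m N + k = k + a * c * m j * M m j := by
    rw [hc]; show a * (m j * M m j * c) + k = _; ring
  rw [digit, key, Nat.add_mul_div_right _ _ hMpos, Nat.add_mul_mod_self_right, digit]

lemma digit_add_mul_self (m : ℕ → ℕ) (hm : ∀ k, 2 ≤ m k) {N a k : ℕ}
    (ha : a < m N) (hk : k < M m N) :
    digit m (a * M m N + k) N = a := by
  have hMpos : 0 < M m N := M_pos m hm N
  rw [digit, mul_comm a (M m N), Nat.mul_add_div hMpos, Nat.div_eq_of_lt hk, add_zero,
    Nat.mod_eq_of_lt ha]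

lemma psi_add_mul (m : ℕ → ℕ) (hm : ∀ k, 2 ≤ m k) {N a k : ℕ}
    (ha : a < m N) (hk : k < M m N) (x : G m) :
    psi m (a * M m N + k) x = rad m N x ^ a * psi m k x := by
  have h1 : a * M m N + k < M m (N + 1) := by
    have : (a + 1) * M m N ≤ m N * M m N := Nat.mul_le_mul_right _ (by omega)
    have h2 : a * M m N + k < (a + 1) * M m N := by
      rw [Nat.succ_mul]; omega
    calc a * M m N + k < m N * M m N := lt_of_lt_of_le h2 this
    _ = M m (N + 1) := rfl
  rw [psi_eq_prod m hm h1 x, psi_eq_prod m hm hk x, Finset.prod_range_succ,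
    digit_add_mul_self m hm ha hk]
  rw [mul_comm]
  congr 1
  apply Finset.prod_congr rfl
  intro j hj
  rw [digit_add_mul_of_lt m hm (Finset.mem_range.mp hj)]

lemma sum_range_mul_add (f : ℕ → ℂ) (s Mn : ℕ) :
    ∑ j ∈ Finset.range (s * Mn), f j
      = ∑ a ∈ Finset.range s, ∑ k ∈ Finset.range Mn, f (a * Mn + k) := by
  induction s with
  | zero => simp
  | succ s ih =>
    rw [Nat.succ_mul, Finset.sum_range_add, ih, Finset.sum_range_succ]

lemma sum_psi_mul (m : ℕ → ℕ) (hm : ∀ k, 2 ≤ m k) {s n : ℕ} (hs : s ≤ m n) (x : G m) :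
    ∑ j ∈ Finset.range (s * M m n), psi m j x
      = (∑ a ∈ Finset.range s, rad m n x ^ a) * ∑ k ∈ Finset.range (M m n), psi m k x := by
  rw [sum_range_mul_add, Finset.sum_mul]
  apply Finset.sum_congr rfl
  intro a ha
  rw [Finset.mul_sum]
  apply Finset.sum_congr rfl
  intro k hk
  exact psi_add_mul m hm (lt_of_lt_of_le (Finset.mem_range.mp ha) hs) (Finset.mem_range.mp hk) x

lemma sum_mul_psi_mul (m : ℕ → ℕ) (hm : ∀ k, 2 ≤ m k) {s n : ℕ} (hs : s ≤ m n) (x : G m) :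
    ∑ j ∈ Finset.range (s * M m n), (j : ℂ) * psi m j x
      = (M m n : ℂ) * (∑ a ∈ Finset.range s, (a : ℂ) * rad m n x ^ a)
          * (∑ k ∈ Finset.range (M m n), psi m k x)
        + (∑ a ∈ Finset.range s, rad m n x ^ a)
          * (∑ k ∈ Finset.range (M m n), (k : ℂ) * psi m k x) := by
  rw [sum_range_mul_add]
  have : ∀ a ∈ Finset.range s, ∀ k ∈ Finset.range (M m n),
      ((a * M m n + k : ℕ) : ℂ) * psi m (a * M m n + k) x
        = (M m n : ℂ) * ((a : ℂ) * rad m n x ^ a) * psi m k x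
          + rad m n x ^ a * ((k : ℂ) * psi m k x) := by
    intro a ha k hk
    rw [psi_add_mul m hm (lt_of_lt_of_le (Finset.mem_range.mp ha) hs) (Finset.mem_range.mp hk) x]
    push_cast
    ring
  rw [Finset.sum_congr rfl fun a ha => Finset.sum_congr rfl fun k hk => this a ha k hk]
  simp only [Finset.sum_add_distrib, ← Finset.mul_sum, ← Finset.sum_mul]

lemma geom_rad_zero (m : ℕ → ℕ) (hm : ∀ k, 2 ≤ m k) {q : ℕ} (x : G m) (hx : x q ≠ 0) :
    ∑ a ∈ Finset.range (m q), rad m q x ^ a = 0 := by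
  haveI : NeZero (m q) := ⟨by have := hm q; omega⟩
  set v : ℕ := (x q).val with hv
  have hv1 : 0 < v := by
    rcases Nat.eq_zero_or_pos v with h | h
    · exact absurd ((ZMod.val_eq_zero _).mp h) hx
    · exact h
  have hv2 : v < m q := ZMod.val_lt _
  have hr1 : rad m q x ≠ 1 := by
    rw [rad, Ne, Complex.exp_eq_one_iff]
    push_neg
    intro kk hk
    have h2 : (2 : ℂ) * Real.pi * Complex.I ≠ 0 := by
      simp [Real.pi_ne_zero, Complex.I_ne_zero]
    have hm0 : (m q : ℂ) ≠ 0 := Nat.cast_ne_zero.mpr (by have := hm q; omega)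
    have hvc : (v : ℂ) = kk * m q := by
      rw [div_eq_iff hm0] at hk
      apply mul_left_cancel₀ h2
      linear_combination hk
    have hZ : (v : ℤ) = kk * m q := by exact_mod_cast hvc
    have hk1 : (1:ℤ) ≤ kk ∨ kk ≤ 0 := by omega
    have hmZ : (0:ℤ) < m q := by exact_mod_cast (by omega : 0 < m q)
    rcases hk1 with h | h
    · nlinarith [hZ, hv2]
    · nlinarith [hZ, hv1]
  have hrm : rad m q x ^ m q = 1 := by
    rw [rad, ← Complex.exp_nat_mul]
    have hne : (m q : ℂ) ≠ 0 := Nat.cast_ne_zero.mpr (by have := hm q; omega)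
    have : (m q : ℂ) * (2 * Real.pi * Complex.I * v / m q) = (v : ℤ) * (2 * Real.pi * Complex.I) := by
      push_cast
      field_simp
    rw [this, Complex.exp_int_mul_two_pi_mul_I]
  rw [geom_sum_eq hr1, hrm, sub_self, zero_div]

lemma sum_psi_block (m : ℕ → ℕ) (hm : ∀ k, 2 ≤ m k) (x : G m) (N : ℕ) :
    ∑ k ∈ Finset.range (M m N), psi m k x
      = ∏ j ∈ Finset.range N, ∑ a ∈ Finset.range (m j), rad m j x ^ a := by
  induction N with
  | zero =>
    show ∑ k ∈ Finset.range (M m 0), psi m k x = 1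
    simp [M, psi, digit]
  | succ N ih =>
    have : M m (N + 1) = m N * M m N := rfl
    rw [this, sum_psi_mul m hm (le_refl (m N)) x, ih, Finset.prod_range_succ]
    ring

lemma sum_psi_zero (m : ℕ → ℕ) (hm : ∀ k, 2 ≤ m k) (x : G m) {N q : ℕ}
    (hq : q < N) (hx : x q ≠ 0) :
    ∑ k ∈ Finset.range (M m N), psi m k x = 0 := by
  rw [sum_psi_block m hm x N]
  exact Finset.prod_eq_zero (Finset.mem_range.mpr hq) (geom_rad_zero m hm x hx)

lemma sum_mul_psi_zero (m : ℕ → ℕ) (hm : ∀ k, 2 ≤ m k) (x : G m) {t u : ℕ}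
    (ht : x t ≠ 0) (hu : x u ≠ 0) (htu : t < u) :
    ∀ N, u < N → ∑ k ∈ Finset.range (M m N), (k : ℂ) * psi m k x = 0 := by
  intro N
  induction N with
  | zero => omega
  | succ N ih =>
    intro hN
    have hstep : M m (N + 1) = m N * M m N := rfl
    rw [hstep, sum_mul_psi_mul m hm (le_refl (m N)) x]
    rcases Nat.lt_or_ge u N with h | h
    · rw [ih h, sum_psi_zero m hm x (htu.trans h) ht]
      ring
    · have huN : u = N := by omega
      subst huN
      rw [sum_psi_zero m hm x htu ht, geom_rad_zero m hm x hu]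
      ring

lemma sum_D_eq (m : ℕ → ℕ) (x : G m) (L : ℕ) :
    ∑ k ∈ Finset.range L, D m k x
      = ∑ i ∈ Finset.range L, ((L : ℂ) - 1 - (i : ℂ)) * psi m i x := by
  induction L with
  | zero => simp
  | succ L ih =>
    rw [Finset.sum_range_succ, ih, D, Finset.sum_range_succ]
    push_cast
    rw [← Finset.sum_add_distrib]
    rw [show ((L : ℂ) + 1 - 1 - (L : ℂ)) * psi m L x = 0 by ring, add_zero]
    apply Finset.sum_congr rfl
    intro i hi
    ring


/-- vanishing of the Fejér kernel `K_{s M_n}` off suitable cylinders. -/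
theorem statement6 (m : ℕ → ℕ) (hm : ∀ k, 2 ≤ m k) (n t : ℕ) (hnt : t < n)
    (s : ℕ) (hs1 : 1 ≤ s) (hs2 : s ≤ m n - 1) (x : G m)
    (hx1 : ∀ j < t, x j = 0) (hx2 : x t ≠ 0)
    (hx3 : ∃ j, t < j ∧ j < n ∧ x j ≠ 0) :
    K m (s * M m n) x = 0 := by
  obtain ⟨u, htu, hun, hu⟩ := hx3
  have hs : s ≤ m n := by have := hm n; omega
  have hS : ∑ k ∈ Finset.range (M m n), psi m k x = 0 :=
    sum_psi_zero m hm x hnt hx2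
  have hT : ∑ k ∈ Finset.range (M m n), (k : ℂ) * psi m k x = 0 :=
    sum_mul_psi_zero m hm x hx2 hu htu n hun
  have hS' : ∑ j ∈ Finset.range (s * M m n), psi m j x = 0 := by
    rw [sum_psi_mul m hm hs x, hS, mul_zero]
  have hT' : ∑ j ∈ Finset.range (s * M m n), (j : ℂ) * psi m j x = 0 := by
    rw [sum_mul_psi_mul m hm hs x, hS, hT]
    ring
  have hsum : ∑ k ∈ Finset.range (s * M m n), D m k x = 0 := by
    rw [sum_D_eq]
    have : ∀ i ∈ Finset.range (s * M m n),
        (((s * M m n : ℕ) : ℂ) - 1 - (i : ℂ)) * psi m i x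
          = (((s * M m n : ℕ) : ℂ) - 1) * psi m i x - (i : ℂ) * psi m i x := by
      intro i hi; ring
    rw [Finset.sum_congr rfl this, Finset.sum_sub_distrib, ← Finset.mul_sum, hS', hT']
    ring
  rw [K, hsum, mul_zero]


end Vilenkin

end
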